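/- arXiv:1909.02193 — 3 statements merged into one kernel-verified Lean document; each statement's English description precedes it below -/
import Mathlib

section
/- For fixed b > 0 and c > 0, the function f(a,b,c) = e^{-a/b} ∑_{i=0}^∞ ((a/b)^i / i!) · γ(1+i, c/b)/Γ(1+i), where γ is the lower incomplete gamma function, is strictly decreasing in a on [0, ∞). -/
open Real

/-- Lower incomplete gamma function γ(p, x) = ∫_0^x t^(p-1) e^(-t) dt. -/
noncomputable def lowerIncGamma (p x : ℝ) : ℝ := ∫ t in (0:ℝ)..x, t ^ (p - 1) * Real.exp (-t)

/-- f(a,b,c) = e^{-a/b} ∑_{i=0}^∞ ((a/b)^i / i!) γ(1+i, c/b)/Γ(1+i), with Γ(1+i) = i!. -/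
noncomputable def outageF (a b c : ℝ) : ℝ :=
  Real.exp (-(a / b)) *
    ∑' i : ℕ, ((a / b) ^ i / (Nat.factorial i)) *
      (lowerIncGamma (1 + i) (c / b) / (Nat.factorial i))

open Finset

section Aux

lemma hasDerivAt_antideriv (n : ℕ) (t : ℝ) :
    HasDerivAt (fun t : ℝ =>
        -(Real.exp (-t) * ∑ k ∈ range (n+1), ((n.factorial : ℝ) / k.factorial) * t ^ k))
      (t ^ n * Real.exp (-t)) t := by
  have hP : HasDerivAt (fun t : ℝ => ∑ k ∈ range (n+1), ((n.factorial : ℝ) / k.factorial) * t ^ k)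
      (∑ k ∈ range (n+1), ((n.factorial : ℝ) / k.factorial) * (k * t ^ (k-1))) t :=
    HasDerivAt.fun_sum fun k _ => (hasDerivAt_pow k t).const_mul _
  have hsum : (∑ k ∈ range (n+1), ((n.factorial : ℝ) / k.factorial) * (k * t ^ (k-1)))
      = (∑ k ∈ range (n+1), ((n.factorial : ℝ) / k.factorial) * t ^ k) - t ^ n := by
    rw [Finset.sum_range_succ' (fun k => ((n.factorial : ℝ) / k.factorial) * (k * t ^ (k-1)))]
    rw [Finset.sum_range_succ (fun k => ((n.factorial : ℝ) / k.factorial) * t ^ k)]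
    simp only [Nat.cast_zero, zero_mul, mul_zero, add_zero, Nat.factorial_zero]
    have : ∀ i ∈ range n, ((n.factorial : ℝ) / (i+1).factorial) * ((i+1 : ℕ) * t ^ (i+1-1))
        = ((n.factorial : ℝ) / i.factorial) * t ^ i := by
      intro i _
      have h1 : ((i+1).factorial : ℝ) = (i+1) * i.factorial := by
        push_cast [Nat.factorial_succ]; ring
      have h2 : (i.factorial : ℝ) ≠ 0 := Nat.cast_ne_zero.mpr i.factorial_ne_zero
      have h3 : ((i:ℝ)+1) ≠ 0 := by positivity
      rw [Nat.add_sub_cancel, h1]; push_cast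
      field_simp [h1]
    rw [Finset.sum_congr rfl this]
    have hnn : ((n.factorial : ℝ) / n.factorial) = 1 := by
      field_simp
    rw [hnn]
    ring
  have hexp : HasDerivAt (fun t : ℝ => Real.exp (-t)) (-Real.exp (-t)) t := by
    exact ((Real.hasDerivAt_exp (-t)).comp t (hasDerivAt_neg t)).congr_deriv (by simp)
  have := ((hexp.fun_mul hP).fun_neg)
  rw [hsum] at this
  exact this.congr_deriv (by ring)

lemma lowerIncGamma_nat (n : ℕ) (y : ℝ) :
    lowerIncGamma (1 + n) y =
      (n.factorial : ℝ) - Real.exp (-y) * ∑ k ∈ range (n+1), ((n.factorial : ℝ) / k.factorial) * y ^ k := by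
  have h1 : lowerIncGamma (1 + n) y = ∫ t in (0:ℝ)..y, t ^ n * Real.exp (-t) := by
    unfold lowerIncGamma
    congr 1
    ext t
    rw [show (1 + (n:ℝ)) - 1 = (n:ℝ) by ring, Real.rpow_natCast]
  have h0 : (∑ k ∈ range (n+1), ((n.factorial : ℝ)/k.factorial) * (0:ℝ)^k) = n.factorial := by
    rw [Finset.sum_eq_single 0]
    · simp
    · intro k _ hk; simp [zero_pow hk]
    · simp
  rw [h1, intervalIntegral.integral_eq_sub_of_hasDerivAt
      (fun t _ => hasDerivAt_antideriv n t)
      (Continuous.intervalIntegrable (by continuity) 0 y), h0]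
  simp only [Real.exp_zero, neg_zero, one_mul]
  ring

/-- The function `T k x = e^{-x} ∑_{i ≤ k} x^i/i!`. -/
noncomputable def Tfun (k : ℕ) (x : ℝ) : ℝ :=
  Real.exp (-x) * ∑ i ∈ range (k+1), x ^ i / i.factorial

lemma Tfun_hasDerivAt (k : ℕ) (x : ℝ) :
    HasDerivAt (Tfun k) (-(Real.exp (-x) * x ^ k / k.factorial)) x := by
  have hP : HasDerivAt (fun x : ℝ => ∑ i ∈ range (k+1), x ^ i / i.factorial)
      (∑ i ∈ range (k+1), ((i:ℝ) * x ^ (i-1)) / i.factorial) x :=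
    HasDerivAt.fun_sum fun i _ => (hasDerivAt_pow i x).div_const _
  have hsum : (∑ i ∈ range (k+1), ((i:ℝ) * x ^ (i-1)) / i.factorial)
      = (∑ i ∈ range (k+1), x ^ i / i.factorial) - x ^ k / k.factorial := by
    rw [Finset.sum_range_succ' (fun i => ((i:ℝ) * x ^ (i-1)) / i.factorial)]
    rw [Finset.sum_range_succ (fun i => x ^ i / (i.factorial : ℝ))]
    simp only [Nat.cast_zero, zero_mul, zero_div, add_zero, Nat.cast_add, Nat.cast_one]
    have : ∀ i ∈ range k, (((i:ℝ)+1) * x ^ (i+1-1)) / ((i+1).factorial : ℝ)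
        = x ^ i / i.factorial := by
      intro i _
      have h1 : (((i+1).factorial : ℝ)) = (i+1) * i.factorial := by
        push_cast [Nat.factorial_succ]; ring
      have h2 : (i.factorial : ℝ) ≠ 0 := Nat.cast_ne_zero.mpr i.factorial_ne_zero
      have h3 : ((i:ℝ)+1) ≠ 0 := by positivity
      rw [h1, Nat.add_sub_cancel]
      field_simp
    rw [Finset.sum_congr rfl this]
    ring
  have hexp : HasDerivAt (fun x : ℝ => Real.exp (-x)) (-Real.exp (-x)) x := by
    exact ((Real.hasDerivAt_exp (-x)).comp x (hasDerivAt_neg x)).congr_deriv (by simp)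
  have := hexp.fun_mul hP
  rw [hsum] at this
  unfold Tfun
  exact this.congr_deriv (by ring)

lemma Tfun_strictAntiOn (k : ℕ) : StrictAntiOn (Tfun k) (Set.Ici 0) := by
  apply strictAntiOn_of_deriv_neg (convex_Ici 0)
  · exact fun x _ => ((Tfun_hasDerivAt k x).continuousAt).continuousWithinAt
  · intro x hx
    rw [interior_Ici] at hx
    rw [(Tfun_hasDerivAt k x).deriv]
    have hx' : (0:ℝ) < x := hx
    have : 0 < Real.exp (-x) * x ^ k / k.factorial := by positivity
    linarith

lemma Tfun_nonneg (k : ℕ) {x : ℝ} (hx : 0 ≤ x) : 0 ≤ Tfun k x := by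
  unfold Tfun
  positivity

lemma Tfun_le_one (k : ℕ) {x : ℝ} (hx : 0 ≤ x) : Tfun k x ≤ 1 := by
  unfold Tfun
  have h := Real.sum_le_exp_of_nonneg hx (k+1)
  calc Real.exp (-x) * ∑ i ∈ range (k+1), x ^ i / i.factorial
      ≤ Real.exp (-x) * Real.exp x := by
        apply mul_le_mul_of_nonneg_left h (Real.exp_nonneg _)
    _ = 1 := by rw [← Real.exp_add]; simp

lemma exp_eq_tsum_pow_div (y : ℝ) : Real.exp y = ∑' n : ℕ, y ^ n / n.factorial := by
  rw [Real.exp_eq_exp_ℝ, NormedSpace.exp_eq_tsum_div]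

lemma gamma_div_fact (i : ℕ) (y : ℝ) :
    lowerIncGamma (1 + i) y / (i.factorial : ℝ)
      = 1 - Real.exp (-y) * ∑ k ∈ range (i+1), y ^ k / k.factorial := by
  rw [lowerIncGamma_nat]
  have hi : (i.factorial : ℝ) ≠ 0 := Nat.cast_ne_zero.mpr i.factorial_ne_zero
  have : (∑ k ∈ range (i+1), ((i.factorial : ℝ) / k.factorial) * y ^ k)
      = i.factorial * ∑ k ∈ range (i+1), y ^ k / k.factorial := by
    rw [Finset.mul_sum]
    refine Finset.sum_congr rfl fun k _ => ?_
    field_simp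
  rw [this]
  field_simp

lemma tail_formula (i : ℕ) (y : ℝ) :
    (1:ℝ) - Real.exp (-y) * ∑ k ∈ range (i+1), y ^ k / k.factorial
      = Real.exp (-y) * ∑' j : ℕ, y ^ (j + (i+1)) / (j + (i+1)).factorial := by
  have hsummable := Real.summable_pow_div_factorial y
  have h := Summable.sum_add_tsum_nat_add (f := fun n => y ^ n / (n.factorial : ℝ)) (i+1) hsummable
  rw [← exp_eq_tsum_pow_div] at h
  have : (∑' j : ℕ, y ^ (j + (i+1)) / ((j + (i+1)).factorial : ℝ))
      = Real.exp y - ∑ k ∈ range (i+1), y ^ k / k.factorial := by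
    rw [← h]; ring
  rw [this, mul_sub, ← Real.exp_add]
  simp

/-- Summand over pairs `(i, j)`. -/
noncomputable def Ffun (x y : ℝ) : ℕ × ℕ → ℝ := fun p =>
  x ^ p.1 / p.1.factorial * (y ^ (p.1 + p.2 + 1) / ((p.1 + p.2 + 1).factorial : ℝ))

/-- Regrouped summand over pairs `(k, m)` with `m ≤ k`. -/
noncomputable def Gfun (x y : ℝ) : ℕ × ℕ → ℝ := fun q =>
  if q.2 ≤ q.1 then x ^ q.2 / q.2.factorial * (y ^ (q.1 + 1) / ((q.1 + 1).factorial : ℝ)) else 0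

set_option maxHeartbeats 1000000 in
lemma Ffun_summable {x y : ℝ} (hx : 0 ≤ x) (hy : 0 ≤ y) : Summable (Ffun x y) := by
  have hbound : ∀ p : ℕ × ℕ, Ffun x y p
      ≤ (Real.exp y * (x ^ p.1 / p.1.factorial)) * (y ^ p.2 / p.2.factorial) := by
    rintro ⟨i, j⟩
    have hfac : ((i+1).factorial : ℝ) * (j.factorial : ℝ) ≤ ((i + j + 1).factorial : ℝ) := by
      have hle := Nat.le_of_dvd (Nat.factorial_pos _)
        (Nat.factorial_mul_factorial_dvd_factorial_add (i+1) j)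
      calc ((i+1).factorial : ℝ) * j.factorial
          = (((i+1).factorial * j.factorial : ℕ) : ℝ) := by push_cast; ring
        _ ≤ (((i+1+j).factorial : ℕ) : ℝ) := by exact_mod_cast hle
        _ = ((i + j + 1).factorial : ℝ) := by rw [show i+1+j = i+j+1 from by omega]
    have h1 : y ^ (i + j + 1) / ((i + j + 1).factorial : ℝ)
        ≤ y ^ (i+1) / ((i+1).factorial : ℝ) * (y ^ j / j.factorial) := by
      rw [show i + j + 1 = (i+1) + j from by omega, pow_add, div_mul_div_comm]
      gcongr
      rw [show (i+1) + j = i + j + 1 from by omega]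
      exact hfac
    have h2 : y ^ (i+1) / ((i+1).factorial : ℝ) ≤ Real.exp y := by
      calc y ^ (i+1) / ((i+1).factorial : ℝ)
          ≤ ∑ m ∈ range (i+2), y ^ m / m.factorial := by
            have := Finset.single_le_sum (f := fun m => y ^ m / (m.factorial : ℝ))
              (s := range (i+2)) (fun m _ => by positivity)
              (by simp : i+1 ∈ range (i+2))
            exact this
        _ ≤ Real.exp y := Real.sum_le_exp_of_nonneg hy _
    have hxi : (0:ℝ) ≤ x ^ i / i.factorial := by positivity
    calc Ffun x y (i, j) = x ^ i / i.factorial * (y ^ (i + j + 1) / ((i + j + 1).factorial : ℝ)) := rfl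
      _ ≤ x ^ i / i.factorial * (y ^ (i+1) / ((i+1).factorial : ℝ) * (y ^ j / j.factorial)) := by
          apply mul_le_mul_of_nonneg_left h1 hxi
      _ ≤ x ^ i / i.factorial * (Real.exp y * (y ^ j / j.factorial)) := by
          apply mul_le_mul_of_nonneg_left ?_ hxi
          apply mul_le_mul_of_nonneg_right h2 (by positivity)
      _ = (Real.exp y * (x ^ i / i.factorial)) * (y ^ j / j.factorial) := by ring
  have hsum : Summable fun p : ℕ × ℕ =>
      (Real.exp y * (x ^ p.1 / p.1.factorial)) * (y ^ p.2 / p.2.factorial) :=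
    Summable.mul_of_nonneg ((Real.summable_pow_div_factorial x).mul_left (Real.exp y))
      (Real.summable_pow_div_factorial y)
      (fun i => by positivity) (fun j => by positivity)
  exact Summable.of_nonneg_of_le (fun p => by unfold Ffun; positivity) hbound hsum

lemma inj_aux : Function.Injective (fun p : ℕ × ℕ => (p.1 + p.2, p.1)) := by
  rintro ⟨i, j⟩ ⟨i', j'⟩ h
  have h1 : i + j = i' + j' := congrArg Prod.fst h
  have h2 : i = i' := congrArg Prod.snd h
  simp only [Prod.mk.injEq]
  omega

lemma Gfun_comp (x y : ℝ) (p : ℕ × ℕ) :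
    Gfun x y ((fun p : ℕ × ℕ => (p.1 + p.2, p.1)) p) = Ffun x y p := by
  obtain ⟨i, j⟩ := p
  simp only [Gfun, Ffun, if_pos (by omega : i ≤ i + j)]

lemma Gfun_support (x y : ℝ) :
    Function.support (Gfun x y) ⊆ Set.range (fun p : ℕ × ℕ => (p.1 + p.2, p.1)) := by
  rintro ⟨k, m⟩ hq
  simp only [Function.mem_support, Gfun] at hq
  have hm : m ≤ k := by by_contra h; simp [h] at hq
  exact ⟨(m, k - m), by simp [Prod.ext_iff]; omega⟩

lemma Gfun_summable {x y : ℝ} (hx : 0 ≤ x) (hy : 0 ≤ y) : Summable (Gfun x y) := by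
  rw [← Function.Injective.summable_iff inj_aux (by
      intro q hq
      by_contra h
      exact hq (Gfun_support x y (Function.mem_support.mpr h)))]
  have : (Gfun x y) ∘ (fun p : ℕ × ℕ => (p.1 + p.2, p.1)) = Ffun x y := by
    funext p; exact Gfun_comp x y p
  rw [this]
  exact Ffun_summable hx hy

lemma rep {x y : ℝ} (hx : 0 ≤ x) (hy : 0 ≤ y) :
    Real.exp (-x) * ∑' i : ℕ, (x ^ i / (i.factorial : ℝ))
        * (lowerIncGamma (1 + i) y / i.factorial)
      = Real.exp (-y) * ∑' k : ℕ, (y ^ (k+1) / ((k+1).factorial : ℝ)) * Tfun k x := by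
  have hterm : ∀ i : ℕ, (x ^ i / (i.factorial : ℝ)) * (lowerIncGamma (1 + i) y / i.factorial)
      = Real.exp (-y) * ∑' j : ℕ, Ffun x y (i, j) := by
    intro i
    rw [gamma_div_fact, tail_formula, ← mul_assoc, mul_comm (x ^ i / (i.factorial : ℝ)),
      mul_assoc, ← tsum_mul_left]
    congr 1
    refine tsum_congr fun j => ?_
    rw [show j + (i+1) = i + j + 1 from by omega]
    simp only [Ffun]
  have h1 : (∑' i : ℕ, (x ^ i / (i.factorial : ℝ)) * (lowerIncGamma (1 + i) y / i.factorial))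
      = Real.exp (-y) * ∑' i : ℕ, ∑' j : ℕ, Ffun x y (i, j) := by
    rw [← tsum_mul_left]
    exact tsum_congr hterm
  have h2 : (∑' i : ℕ, ∑' j : ℕ, Ffun x y (i, j)) = ∑' p : ℕ × ℕ, Ffun x y p :=
    (Summable.tsum_prod' (Ffun_summable hx hy) (Ffun_summable hx hy).prod_factor).symm
  have h3 : (∑' p : ℕ × ℕ, Ffun x y p) = ∑' q : ℕ × ℕ, Gfun x y q := by
    rw [← inj_aux.tsum_eq (Gfun_support x y)]
    exact tsum_congr fun p => (Gfun_comp x y p).symm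
  have h4 : (∑' q : ℕ × ℕ, Gfun x y q) = ∑' k : ℕ, ∑' m : ℕ, Gfun x y (k, m) :=
    Summable.tsum_prod' (Gfun_summable hx hy) (Gfun_summable hx hy).prod_factor
  have h5 : ∀ k : ℕ, (∑' m : ℕ, Gfun x y (k, m))
      = (y ^ (k+1) / ((k+1).factorial : ℝ)) * ∑ m ∈ range (k+1), x ^ m / m.factorial := by
    intro k
    rw [tsum_eq_sum (s := range (k+1)) (by
      intro m hm
      simp only [Finset.mem_range] at hm
      simp only [Gfun, if_neg (by omega : ¬ m ≤ k)])]
    rw [Finset.mul_sum]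
    refine Finset.sum_congr rfl fun m hm => ?_
    simp only [Finset.mem_range] at hm
    simp only [Gfun, if_pos (by omega : m ≤ k)]
    ring
  rw [h1, h2, h3, h4]
  rw [← mul_assoc, mul_comm (Real.exp (-x)), mul_assoc]
  congr 1
  rw [← tsum_mul_left]
  refine tsum_congr fun k => ?_
  rw [h5 k]
  simp only [Tfun]
  ring

end Aux

theorem stmt0 (b c : ℝ) (hb : 0 < b) (hc : 0 < c) :
    StrictAntiOn (fun a => outageF a b c) (Set.Ici 0) := by
  intro a1 ha1 a2 ha2 h12
  set y : ℝ := c / b with hy_def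
  have hy : 0 < y := div_pos hc hb
  have hx1 : (0:ℝ) ≤ a1 / b := div_nonneg (by exact ha1) hb.le
  have hx2 : (0:ℝ) ≤ a2 / b := div_nonneg (by exact ha2) hb.le
  have hxlt : a1 / b < a2 / b := by gcongr
  have e1 : outageF a1 b c
      = Real.exp (-y) * ∑' k : ℕ, (y ^ (k+1) / ((k+1).factorial : ℝ)) * Tfun k (a1 / b) :=
    rep hx1 hy.le
  have e2 : outageF a2 b c
      = Real.exp (-y) * ∑' k : ℕ, (y ^ (k+1) / ((k+1).factorial : ℝ)) * Tfun k (a2 / b) :=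
    rep hx2 hy.le
  simp only [e1, e2]
  have hsumm : Summable fun k : ℕ => (y ^ (k+1) / ((k+1).factorial : ℝ)) * Tfun k (a1 / b) := by
    have hS : Summable fun k : ℕ => y ^ (k+1) / ((k+1).factorial : ℝ) :=
      (summable_nat_add_iff 1).mpr (Real.summable_pow_div_factorial y)
    refine Summable.of_nonneg_of_le (fun k => ?_) (fun k => ?_) hS
    · exact mul_nonneg (by positivity) (Tfun_nonneg k hx1)
    · calc (y ^ (k+1) / ((k+1).factorial : ℝ)) * Tfun k (a1 / b)
          ≤ (y ^ (k+1) / ((k+1).factorial : ℝ)) * 1 :=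
            mul_le_mul_of_nonneg_left (Tfun_le_one k hx1) (by positivity)
        _ = y ^ (k+1) / ((k+1).factorial : ℝ) := mul_one _
  have hlt : (∑' k : ℕ, (y ^ (k+1) / ((k+1).factorial : ℝ)) * Tfun k (a2 / b))
      < ∑' k : ℕ, (y ^ (k+1) / ((k+1).factorial : ℝ)) * Tfun k (a1 / b) := by
    refine Summable.tsum_lt_tsum_of_nonneg (i := 0)
      (fun k => mul_nonneg (by positivity) (Tfun_nonneg k hx2))
      (fun k => mul_le_mul_of_nonneg_left
        ((Tfun_strictAntiOn k) hx1 hx2 hxlt).le (by positivity))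
      (mul_lt_mul_of_pos_left ((Tfun_strictAntiOn 0) hx1 hx2 hxlt) (by positivity))
      hsumm
  exact mul_lt_mul_of_pos_left hlt (Real.exp_pos _)
end

section
/- For fixed b > 0 and c > 0, the partial derivative of f(a,b,c) = e^{-a/b} ∑_{i=0}^∞ ((a/b)^i/i!) · γ(1+i, c/b)/Γ(1+i) with respect to a equals (1/b) e^{-a/b} ∑_{i=0}^∞ ((a/b)^i/i!) · (Q(4+2i, 2c/b) − Q(2+2i, 2c/b)), where Q(m,t) is the CDF of the central chi-squared distribution with m degrees of freedom evaluated at t. -/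
open Real

/-- CDF of the central chi-squared distribution with m degrees of freedom. -/
noncomputable def chiSqCDF (m : ℕ) (t : ℝ) : ℝ :=
  lowerIncGamma ((m : ℝ) / 2) (t / 2) / Real.Gamma ((m : ℝ) / 2)

lemma lig_nonneg (p x : ℝ) (hx : 0 ≤ x) : 0 ≤ lowerIncGamma p x := by
  apply intervalIntegral.integral_nonneg hx
  intro t ht
  exact mul_nonneg (Real.rpow_nonneg ht.1 _) (Real.exp_pos _).le

lemma lig_le_Gamma (p x : ℝ) (hp : 0 < p) (hx : 0 ≤ x) :
    lowerIncGamma p x ≤ Real.Gamma p := by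
  rw [Real.Gamma_eq_integral hp, lowerIncGamma,
    intervalIntegral.integral_of_le hx]
  have : ∀ t : ℝ, t ^ (p - 1) * Real.exp (-t) = Real.exp (-t) * t ^ (p - 1) := fun t => mul_comm _ _
  simp_rw [this]
  apply MeasureTheory.setIntegral_mono_set (Real.GammaIntegral_convergent hp)
  · filter_upwards [MeasureTheory.ae_restrict_mem measurableSet_Ioi] with t ht
    exact mul_nonneg (Real.exp_pos _).le (Real.rpow_nonneg (le_of_lt ht) _)
  · exact HasSubset.Subset.eventuallyLE Set.Ioc_subset_Ioi_self

/-- ∂f/∂a = (1/b) e^{-a/b} ∑_i ((a/b)^i/i!) (Q(4+2i, 2c/b) − Q(2+2i, 2c/b)). -/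
theorem stmt5 (b c : ℝ) (hb : 0 < b) (hc : 0 < c) (a : ℝ) (ha : 0 ≤ a) :
    HasDerivAt (fun x => outageF x b c)
      ((1 / b) * Real.exp (-(a / b)) *
        ∑' i : ℕ, ((a / b) ^ i / (Nat.factorial i)) *
          (chiSqCDF (4 + 2 * i) (2 * c / b) - chiSqCDF (2 + 2 * i) (2 * c / b))) a := by
  -- setup
  set q : ℝ := c / b with hq
  have hq0 : 0 ≤ q := le_of_lt (div_pos hc hb)
  set g : ℕ → ℝ := fun i => lowerIncGamma (1 + (i : ℝ)) q / (Nat.factorial i) with hg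
  have hGammaFact : ∀ i : ℕ, Real.Gamma (1 + (i : ℝ)) = (Nat.factorial i : ℝ) := by
    intro i
    rw [add_comm, Real.Gamma_nat_eq_factorial]
  have hg_nonneg : ∀ i, 0 ≤ g i := fun i =>
    div_nonneg (lig_nonneg _ _ hq0) (Nat.cast_nonneg _)
  have hg_le : ∀ i, g i ≤ 1 := by
    intro i
    rw [hg]
    have h1 : lowerIncGamma (1 + (i : ℝ)) q ≤ (Nat.factorial i : ℝ) := by
      rw [← hGammaFact i]
      exact lig_le_Gamma _ _ (by positivity) hq0
    exact div_le_one_of_le₀ h1 (Nat.cast_nonneg _)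
  -- chiSqCDF rewrites
  have hchi2 : ∀ i : ℕ, chiSqCDF (2 + 2 * i) (2 * c / b) = g i := by
    intro i
    have h1 : ((2 + 2 * i : ℕ) : ℝ) / 2 = 1 + (i : ℝ) := by push_cast; ring
    have h2 : (2 * c / b) / 2 = q := by rw [hq]; ring
    rw [chiSqCDF, h1, h2, hGammaFact]
  have hchi4 : ∀ i : ℕ, chiSqCDF (4 + 2 * i) (2 * c / b) = g (i + 1) := by
    intro i
    have h1 : ((4 + 2 * i : ℕ) : ℝ) / 2 = 1 + ((i + 1 : ℕ) : ℝ) := by push_cast; ring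
    have h2 : (2 * c / b) / 2 = q := by rw [hq]; ring
    rw [chiSqCDF, h1, h2, hGammaFact]
  -- functions in the series
  set f : ℕ → ℝ → ℝ := fun i x => ((x / b) ^ i / (Nat.factorial i)) * g i with hf
  set f' : ℕ → ℝ → ℝ := fun i x =>
    ((i : ℝ) * (x / b) ^ (i - 1) * (1 / b) / (Nat.factorial i)) * g i with hf'
  have hderiv : ∀ i x, HasDerivAt (f i) (f' i x) x := by
    intro i x
    have h1 : HasDerivAt (fun x : ℝ => x / b) (1 / b) x := (hasDerivAt_id x).div_const b
    have h2 : HasDerivAt (fun x : ℝ => (x / b) ^ i)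
        ((i : ℝ) * (x / b) ^ (i - 1) * (1 / b)) x := h1.pow i
    have h3 := (h2.div_const (Nat.factorial i : ℝ)).mul_const (g i)
    convert h3 using 1
  set r : ℝ := (a + 1) / b with hr
  have hr0 : 0 < r := div_pos (by linarith) hb
  set u : ℕ → ℝ := fun i => Nat.rec 0 (fun k _ => r ^ k / (Nat.factorial k) / b) i with hu
  have hu_summ : Summable u := by
    rw [← summable_nat_add_iff 1]
    have : Summable (fun k : ℕ => r ^ k / (Nat.factorial k)) :=
      Real.summable_pow_div_factorial r
    exact this.div_const b
  set s : Set ℝ := Set.Ioo (-(a + 1)) (a + 1) with hs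
  have hbound : ∀ i x, x ∈ s → ‖f' i x‖ ≤ u i := by
    rintro (_ | k) x hx
    · simp [hf', hu]
    · have hxb : |x / b| ≤ r := by
        rw [abs_div, abs_of_pos hb, hr]
        have hxa : |x| ≤ a + 1 := abs_le.mpr ⟨le_of_lt hx.1, le_of_lt hx.2⟩
        gcongr
      have h1 : ‖f' (k + 1) x‖ =
          ((k + 1 : ℝ) * |x / b| ^ k * (1 / b) / (Nat.factorial (k + 1))) * |g (k + 1)| := by
        rw [hf']
        simp only [Nat.cast_add, Nat.cast_one, Nat.add_sub_cancel]
        rw [Real.norm_eq_abs, abs_mul, abs_div, abs_mul, abs_mul, abs_pow,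
          abs_of_nonneg (by positivity : (0:ℝ) ≤ (k:ℝ) + 1),
          abs_of_nonneg (by positivity : (0:ℝ) ≤ 1 / b),
          abs_of_nonneg (by positivity : (0:ℝ) ≤ ((Nat.factorial (k+1) : ℕ) : ℝ))]
      rw [h1]
      have h2 : u (k + 1) = r ^ k / (Nat.factorial k) / b := rfl
      rw [h2]
      have hgabs : |g (k + 1)| ≤ 1 := abs_le.mpr ⟨by linarith [hg_nonneg (k+1)], hg_le (k+1)⟩
      calc ((k + 1 : ℝ) * |x / b| ^ k * (1 / b) / (Nat.factorial (k + 1))) * |g (k + 1)|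
          ≤ ((k + 1 : ℝ) * r ^ k * (1 / b) / (Nat.factorial (k + 1))) * 1 := by
            apply mul_le_mul _ hgabs (abs_nonneg _) (by positivity)
            apply div_le_div_of_nonneg_right _ (by positivity)
            apply mul_le_mul_of_nonneg_right _ (by positivity)
            exact mul_le_mul_of_nonneg_left (pow_le_pow_left₀ (abs_nonneg _) hxb k)
              (by positivity)
        _ = r ^ k / (Nat.factorial k) / b := by
            rw [mul_one, Nat.factorial_succ]
            push_cast
            field_simp
  have hmem_a : a ∈ s := ⟨by linarith, by linarith⟩
  have hsumm0 : Summable (fun i => f i a) := by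
    apply Summable.of_norm_bounded ((Real.summable_pow_div_factorial (a / b)))
    intro i
    have hab : 0 ≤ a / b := div_nonneg ha hb.le
    rw [hf, norm_mul]
    calc ‖(a / b) ^ i / (Nat.factorial i : ℝ)‖ * ‖g i‖
        ≤ ‖(a / b) ^ i / (Nat.factorial i : ℝ)‖ * 1 := by
          apply mul_le_mul_of_nonneg_left _ (norm_nonneg _)
          rw [Real.norm_eq_abs]
          exact abs_le.mpr ⟨by linarith [hg_nonneg i], hg_le i⟩
      _ = (a / b) ^ i / (Nat.factorial i : ℝ) := by
          rw [mul_one, Real.norm_eq_abs, abs_of_nonneg (by positivity)]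
  -- derivative of the series
  have hS : HasDerivAt (fun x => ∑' i, f i x) (∑' i, f' i a) a := by
    apply hasDerivAt_tsum_of_isPreconnected hu_summ isOpen_Ioo
      (isPreconnected_Ioo) (fun n y _ => hderiv n y) hbound hmem_a hsumm0 hmem_a
  -- derivative of the exponential factor
  have hE : HasDerivAt (fun x : ℝ => Real.exp (-(x / b))) (-(1/b) * Real.exp (-(a / b))) a := by
    have h1 : HasDerivAt (fun x : ℝ => -(x / b)) (-(1/b)) a := ((hasDerivAt_id a).div_const b).neg
    have := h1.exp
    convert this using 1
    ring
  have hprod := hE.mul hS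
  -- identify outageF with the product
  have hfun : (fun x => outageF x b c) = fun x => Real.exp (-(x / b)) * ∑' i, f i x := by
    funext x
    rfl
  rw [hfun]
  convert hprod using 1
  case e'_4 => rfl
  case e'_5 => rfl
  case e'_8 => rfl
  -- now an identity of sums
  have hsummf' : Summable (fun i => f' i a) :=
    Summable.of_norm_bounded hu_summ (fun i => hbound i a hmem_a)
  have hsummA : Summable (fun i => ((a / b) ^ i / (Nat.factorial i : ℝ)) * g i) := hsumm0
  have hsummB : Summable (fun i => ((a / b) ^ i / (Nat.factorial i : ℝ)) * g (i + 1)) := by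
    apply Summable.of_norm_bounded ((Real.summable_pow_div_factorial (a / b)))
    intro i
    have hab : 0 ≤ a / b := div_nonneg ha hb.le
    rw [norm_mul]
    calc ‖(a / b) ^ i / (Nat.factorial i : ℝ)‖ * ‖g (i + 1)‖
        ≤ ‖(a / b) ^ i / (Nat.factorial i : ℝ)‖ * 1 := by
          apply mul_le_mul_of_nonneg_left _ (norm_nonneg _)
          rw [Real.norm_eq_abs]
          exact abs_le.mpr ⟨by linarith [hg_nonneg (i+1)], hg_le (i+1)⟩
      _ = (a / b) ^ i / (Nat.factorial i : ℝ) := by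
          rw [mul_one, Real.norm_eq_abs, abs_of_nonneg (by positivity)]
  -- compute ∑' f' i a
  have hsum_f' : ∑' i, f' i a = (1 / b) * ∑' i, ((a / b) ^ i / (Nat.factorial i : ℝ)) * g (i + 1) := by
    rw [Summable.tsum_eq_zero_add hsummf']
    have h0 : f' 0 a = 0 := by simp [hf']
    rw [h0, zero_add, ← tsum_mul_left]
    congr 1
    funext k
    rw [hf']
    simp only [Nat.cast_add, Nat.cast_one, Nat.add_sub_cancel]
    rw [Nat.factorial_succ]
    have hk : (Nat.factorial k : ℝ) ≠ 0 := Nat.cast_ne_zero.mpr (Nat.factorial_ne_zero k)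
    field_simp
    push_cast
    ring
  -- rewrite the target tsum
  have htarget : ∑' i : ℕ, ((a / b) ^ i / (Nat.factorial i : ℝ)) *
      (chiSqCDF (4 + 2 * i) (2 * c / b) - chiSqCDF (2 + 2 * i) (2 * c / b))
      = (∑' i, ((a / b) ^ i / (Nat.factorial i : ℝ)) * g (i + 1))
        - ∑' i, ((a / b) ^ i / (Nat.factorial i : ℝ)) * g i := by
    rw [← Summable.tsum_sub hsummB hsummA]
    congr 1
    funext i
    rw [hchi4 i, hchi2 i]
    ring
  rw [htarget, hsum_f']
  have hAeq : ∑' i, f i a = ∑' i, ((a / b) ^ i / (Nat.factorial i : ℝ)) * g i := rfl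
  rw [hAeq]
  ring
end

section
/- For fixed a ≥ 0 and c > 0, the limit of f(a, b, c) = e^{-a/b} ∑_{i=0}^∞ ((a/b)^i/i!) γ(1+i, c/b)/Γ(1+i) as b → 0+ equals 0 if a > c and equals 1 if a < c. -/
open Real Filter

-- gamma identity
lemma lig_eq (n : ℕ) (y : ℝ) :
    (∫ t in (0:ℝ)..y, t ^ ((1 + (n:ℝ)) - 1) * Real.exp (-t))
      = (n.factorial : ℝ) * (1 - Real.exp (-y) * ∑ k ∈ Finset.range (n+1), y ^ k / (k.factorial : ℝ)) := by
  have hexp : ∀ t : ℝ, t ^ ((1 + (n:ℝ)) - 1) = t ^ n := by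
    intro t
    rw [show (1 + (n:ℝ)) - 1 = (n:ℝ) by ring, Real.rpow_natCast]
  set F : ℝ → ℝ := fun t => -(Real.exp (-t) * ∑ k ∈ Finset.range (n+1), ((n.factorial : ℝ)/(k.factorial : ℝ)) * t ^ k) with hF
  have hderiv : ∀ t : ℝ, HasDerivAt F (t ^ n * Real.exp (-t)) t := by
    intro t
    have h1 : HasDerivAt (fun t : ℝ => Real.exp (-t)) (-Real.exp (-t)) t := by
      simpa using (hasDerivAt_neg t).exp
    have h2 : HasDerivAt (fun t : ℝ => ∑ k ∈ Finset.range (n+1), ((n.factorial : ℝ)/(k.factorial : ℝ)) * t ^ k)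
        (∑ k ∈ Finset.range n, ((n.factorial : ℝ)/(k.factorial : ℝ)) * t ^ k) t := by
      have h3 : HasDerivAt (fun t : ℝ => ∑ k ∈ Finset.range (n+1), ((n.factorial : ℝ)/(k.factorial : ℝ)) * t ^ k)
          (∑ k ∈ Finset.range (n+1), ((n.factorial : ℝ)/(k.factorial : ℝ)) * ((k:ℝ) * t ^ (k-1))) t := by
        apply HasDerivAt.fun_sum
        intro k _
        exact (hasDerivAt_pow k t).const_mul _
      convert h3 using 1
      rw [Finset.sum_range_succ' (fun k => ((n.factorial : ℝ)/(k.factorial : ℝ)) * ((k:ℝ) * t ^ (k-1)))]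
      simp only [Nat.cast_zero, zero_mul, mul_zero, add_zero, Nat.cast_succ, Nat.add_sub_cancel]
      apply Finset.sum_congr rfl
      intro k _
      have : ((k+1).factorial : ℝ) = (k+1) * (k.factorial : ℝ) := by
        push_cast [Nat.factorial_succ]; ring
      rw [this]
      have hk1 : ((k:ℝ)+1) ≠ 0 := by positivity
      field_simp
    have := ((h1.mul h2).neg)
    refine this.congr_deriv (Eq.symm ?_)
    have key : (∑ k ∈ Finset.range (n+1), ((n.factorial : ℝ)/(k.factorial : ℝ)) * t ^ k)
        - (∑ k ∈ Finset.range n, ((n.factorial : ℝ)/(k.factorial : ℝ)) * t ^ k) = t ^ n := by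
      rw [Finset.sum_range_succ]
      have : ((n.factorial : ℝ)/(n.factorial : ℝ)) = 1 := by
        rw [div_self]; exact_mod_cast Nat.factorial_ne_zero n
      simp [this]
    linear_combination (-Real.exp (-t)) * key
  have hcont : IntervalIntegrable (fun t : ℝ => t ^ ((1 + (n:ℝ)) - 1) * Real.exp (-t))
      MeasureTheory.volume 0 y := by
    apply Continuous.intervalIntegrable
    have : (fun t : ℝ => t ^ ((1 + (n:ℝ)) - 1) * Real.exp (-t))
        = fun t : ℝ => t ^ n * Real.exp (-t) := funext fun t => by rw [hexp]
    rw [this]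
    exact (continuous_pow n).mul (Real.continuous_exp.comp continuous_neg)
  have := intervalIntegral.integral_eq_sub_of_hasDerivAt (fun t _ => by
      simpa [hexp t] using hderiv t) hcont
  rw [this, hF]
  have hsum : ∀ z : ℝ, (∑ k ∈ Finset.range (n+1), ((n.factorial : ℝ)/(k.factorial : ℝ)) * z ^ k)
      = (n.factorial : ℝ) * ∑ k ∈ Finset.range (n+1), z ^ k / (k.factorial : ℝ) := by
    intro z
    rw [Finset.mul_sum]
    exact Finset.sum_congr rfl fun k _ => by ring
  simp only [hsum]
  have e0 : (∑ k ∈ Finset.range (n+1), (0:ℝ) ^ k / (k.factorial : ℝ)) = 1 := by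
    rw [Finset.sum_eq_single 0]
    · simp
    · intro k _ hk; simp [zero_pow hk]
    · simp
  rw [e0]
  simp [Real.exp_zero]
  ring

lemma summable_pois (x : ℝ) : Summable (fun i : ℕ => x ^ i / (i.factorial : ℝ)) :=
  Real.summable_pow_div_factorial x

lemma tsum_pois (x : ℝ) : ∑' i : ℕ, x ^ i / (i.factorial : ℝ) = Real.exp x := by
  rw [Real.exp_eq_exp_ℝ, NormedSpace.exp_eq_tsum_div]

lemma summable_pois1 (x : ℝ) : Summable (fun i : ℕ => (i:ℝ) * (x ^ i / (i.factorial : ℝ))) := by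
  rw [← summable_nat_add_iff 1]
  have : (fun i : ℕ => ((i+1:ℕ):ℝ) * (x ^ (i+1) / ((i+1).factorial : ℝ)))
      = fun i : ℕ => x * (x ^ i / (i.factorial : ℝ)) := by
    funext i
    have : ((i+1).factorial : ℝ) = ((i:ℝ)+1) * (i.factorial : ℝ) := by
      push_cast [Nat.factorial_succ]; ring
    rw [this]
    have h1 : ((i:ℝ)+1) ≠ 0 := by positivity
    push_cast
    field_simp
    ring
  rw [this]
  exact (summable_pois x).mul_left x

lemma tsum_pois1 (x : ℝ) : ∑' i : ℕ, (i:ℝ) * (x ^ i / (i.factorial : ℝ)) = x * Real.exp x := by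
  rw [Summable.tsum_eq_zero_add (summable_pois1 x)]
  have : (fun i : ℕ => ((i+1:ℕ):ℝ) * (x ^ (i+1) / ((i+1).factorial : ℝ)))
      = fun i : ℕ => x * (x ^ i / (i.factorial : ℝ)) := by
    funext i
    have : ((i+1).factorial : ℝ) = ((i:ℝ)+1) * (i.factorial : ℝ) := by
      push_cast [Nat.factorial_succ]; ring
    rw [this]
    have h1 : ((i:ℝ)+1) ≠ 0 := by positivity
    push_cast
    field_simp
    ring
  push_cast
  rw [show ∀ f : ℕ → ℝ, ∑' i : ℕ, f i = ∑' i : ℕ, f i from fun _ => rfl]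
  calc (0:ℝ) * (x ^ 0 / (Nat.factorial 0 : ℝ)) + ∑' i : ℕ, ((i:ℝ)+1) * (x ^ (i+1) / ((i+1).factorial : ℝ))
      = ∑' i : ℕ, x * (x ^ i / (i.factorial : ℝ)) := by
        rw [zero_mul, zero_add]
        congr 1
        funext i
        have := congrFun this i
        push_cast at this ⊢
        exact this
    _ = x * Real.exp x := by rw [tsum_mul_left, tsum_pois]

lemma summable_pois2 (x : ℝ) : Summable (fun i : ℕ => (i:ℝ) * ((i:ℝ)-1) * (x ^ i / (i.factorial : ℝ))) := by
  rw [← summable_nat_add_iff 1]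
  have : (fun i : ℕ => ((i+1:ℕ):ℝ) * (((i+1:ℕ):ℝ)-1) * (x ^ (i+1) / ((i+1).factorial : ℝ)))
      = fun i : ℕ => x * ((i:ℝ) * (x ^ i / (i.factorial : ℝ))) := by
    funext i
    have : ((i+1).factorial : ℝ) = ((i:ℝ)+1) * (i.factorial : ℝ) := by
      push_cast [Nat.factorial_succ]; ring
    rw [this]
    have h1 : ((i:ℝ)+1) ≠ 0 := by positivity
    push_cast
    field_simp
    ring
  exact this ▸ (summable_pois1 x).mul_left x

lemma tsum_pois2 (x : ℝ) :
    ∑' i : ℕ, (i:ℝ) * ((i:ℝ)-1) * (x ^ i / (i.factorial : ℝ)) = x^2 * Real.exp x := by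
  rw [Summable.tsum_eq_zero_add (summable_pois2 x)]
  have : (fun i : ℕ => ((i+1:ℕ):ℝ) * (((i+1:ℕ):ℝ)-1) * (x ^ (i+1) / ((i+1).factorial : ℝ)))
      = fun i : ℕ => x * ((i:ℝ) * (x ^ i / (i.factorial : ℝ))) := by
    funext i
    have : ((i+1).factorial : ℝ) = ((i:ℝ)+1) * (i.factorial : ℝ) := by
      push_cast [Nat.factorial_succ]; ring
    rw [this]
    have h1 : ((i:ℝ)+1) ≠ 0 := by positivity
    push_cast
    field_simp
    ring
  calc ((0:ℕ):ℝ) * (((0:ℕ):ℝ)-1) * (x ^ 0 / ((0:ℕ).factorial : ℝ))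
        + ∑' i : ℕ, ((i+1:ℕ):ℝ) * (((i+1:ℕ):ℝ)-1) * (x ^ (i+1) / ((i+1).factorial : ℝ))
      = ∑' i : ℕ, x * ((i:ℝ) * (x ^ i / (i.factorial : ℝ))) := by
        rw [this]; push_cast; simp
    _ = x^2 * Real.exp x := by rw [tsum_mul_left, tsum_pois1]; ring

lemma summable_sq (x : ℝ) : Summable (fun i : ℕ => ((i:ℝ) - x)^2 * (x ^ i / (i.factorial : ℝ))) := by
  have heq : (fun i : ℕ => ((i:ℝ) - x)^2 * (x ^ i / (i.factorial : ℝ)))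
      = fun i : ℕ => ((i:ℝ) * ((i:ℝ)-1) * (x ^ i / (i.factorial : ℝ)))
        + ((1 - 2*x) * ((i:ℝ) * (x ^ i / (i.factorial : ℝ))) + x^2 * (x ^ i / (i.factorial : ℝ))) := by
    funext i; ring
  rw [heq]
  exact (summable_pois2 x).add (((summable_pois1 x).mul_left _).add ((summable_pois x).mul_left _))

lemma tsum_sq (x : ℝ) :
    ∑' i : ℕ, ((i:ℝ) - x)^2 * (x ^ i / (i.factorial : ℝ)) = x * Real.exp x := by
  have heq : (fun i : ℕ => ((i:ℝ) - x)^2 * (x ^ i / (i.factorial : ℝ)))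
      = fun i : ℕ => ((i:ℝ) * ((i:ℝ)-1) * (x ^ i / (i.factorial : ℝ)))
        + ((1 - 2*x) * ((i:ℝ) * (x ^ i / (i.factorial : ℝ))) + x^2 * (x ^ i / (i.factorial : ℝ))) := by
    funext i; ring
  rw [heq, Summable.tsum_add (summable_pois2 x)
      (((summable_pois1 x).mul_left _).add ((summable_pois x).mul_left _)),
    Summable.tsum_add ((summable_pois1 x).mul_left _) ((summable_pois x).mul_left _),
    tsum_mul_left, tsum_mul_left, tsum_pois2, tsum_pois1, tsum_pois]
  ring

lemma cheb (x t : ℝ) (hx : 0 ≤ x) (ht : 0 < t) (P : ℕ → Prop) [DecidablePred P]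
    (hP : ∀ k, P k → t ≤ |(k:ℝ) - x|) :
    ∑' k : ℕ, (if P k then x ^ k / (k.factorial : ℝ) else 0) ≤ x * Real.exp x / t^2 := by
  have hterm : ∀ k : ℕ, (if P k then x ^ k / (k.factorial : ℝ) else 0)
      ≤ (1/t^2) * (((k:ℝ) - x)^2 * (x ^ k / (k.factorial : ℝ))) := by
    intro k
    have hnn : 0 ≤ x ^ k / (k.factorial : ℝ) := by positivity
    by_cases hk : P k
    · simp only [hk, if_true]
      have h1 : t^2 ≤ ((k:ℝ) - x)^2 := by
        have := hP k hk
        calc t^2 = t * t := sq t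
          _ ≤ |(k:ℝ) - x| * |(k:ℝ) - x| := by
              apply mul_le_mul this this ht.le (abs_nonneg _)
          _ = ((k:ℝ) - x)^2 := by rw [← abs_mul, ← sq, abs_sq]
      calc x ^ k / (k.factorial : ℝ) = (1/t^2) * (t^2 * (x ^ k / (k.factorial : ℝ))) := by
            field_simp
        _ ≤ (1/t^2) * (((k:ℝ) - x)^2 * (x ^ k / (k.factorial : ℝ))) := by
            apply mul_le_mul_of_nonneg_left (mul_le_mul_of_nonneg_right h1 hnn) (by positivity)
    · simp only [hk, if_false]
      positivity
  have hsum : Summable (fun k : ℕ => (1/t^2) * (((k:ℝ) - x)^2 * (x ^ k / (k.factorial : ℝ)))) :=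
    (summable_sq x).mul_left _
  calc ∑' k : ℕ, (if P k then x ^ k / (k.factorial : ℝ) else 0)
      ≤ ∑' k : ℕ, (1/t^2) * (((k:ℝ) - x)^2 * (x ^ k / (k.factorial : ℝ))) := by
        apply Summable.tsum_le_tsum hterm _ hsum
        apply Summable.of_nonneg_of_le _ hterm hsum
        intro k
        by_cases hk : P k <;> simp [hk]
        positivity
    _ = x * Real.exp x / t^2 := by rw [tsum_mul_left, tsum_sq]; ring


lemma B_eq (n : ℕ) (y : ℝ) :
    lowerIncGamma (1 + n) y / (n.factorial : ℝ)
      = 1 - Real.exp (-y) * ∑ k ∈ Finset.range (n+1), y ^ k / (k.factorial : ℝ) := by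
  rw [lowerIncGamma, lig_eq]
  exact mul_div_cancel_left₀ _ (by exact_mod_cast n.factorial_ne_zero)

lemma A_nonneg (y : ℝ) (hy : 0 ≤ y) (n : ℕ) :
    0 ≤ ∑ k ∈ Finset.range (n+1), y ^ k / (k.factorial : ℝ) :=
  Finset.sum_nonneg fun k _ => by positivity

lemma B_eq' (n : ℕ) (y : ℝ) :
    1 - Real.exp (-y) * ∑ k ∈ Finset.range (n+1), y ^ k / (k.factorial : ℝ)
      = Real.exp (-y) * ∑' k : ℕ, y ^ (k + (n+1)) / ((k + (n+1)).factorial : ℝ) := by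
  have h := Summable.sum_add_tsum_nat_add (f := fun k : ℕ => y ^ k / (k.factorial : ℝ)) (n+1) (summable_pois y)
  rw [tsum_pois] at h
  have : (∑' k : ℕ, y ^ (k + (n+1)) / ((k + (n+1)).factorial : ℝ))
      = Real.exp y - ∑ k ∈ Finset.range (n+1), y ^ k / (k.factorial : ℝ) := by
    linarith [h]
  rw [this, mul_sub, ← Real.exp_add]
  simp

lemma B_nonneg (n : ℕ) (y : ℝ) (hy : 0 ≤ y) :
    0 ≤ 1 - Real.exp (-y) * ∑ k ∈ Finset.range (n+1), y ^ k / (k.factorial : ℝ) := by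
  rw [B_eq']
  apply mul_nonneg (Real.exp_nonneg _)
  exact tsum_nonneg fun k => by positivity

lemma B_le_one (n : ℕ) (y : ℝ) (hy : 0 ≤ y) :
    1 - Real.exp (-y) * ∑ k ∈ Finset.range (n+1), y ^ k / (k.factorial : ℝ) ≤ 1 := by
  have := A_nonneg y hy n
  nlinarith [Real.exp_nonneg (-y)]

lemma summable_ite (x : ℝ) (hx : 0 ≤ x) (P : ℕ → Prop) [DecidablePred P] :
    Summable (fun k : ℕ => if P k then x ^ k / (k.factorial : ℝ) else 0) := by
  apply Summable.of_nonneg_of_le _ _ (summable_pois x)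
  · intro k; by_cases h : P k <;> simp [h]; positivity
  · intro k; by_cases h : P k <;> simp [h]; positivity

lemma B_tail (n : ℕ) (y m : ℝ) (hy : 0 ≤ y) (hm : m ≤ (n:ℝ)+1) :
    1 - Real.exp (-y) * ∑ k ∈ Finset.range (n+1), y ^ k / (k.factorial : ℝ)
      ≤ Real.exp (-y) * ∑' k : ℕ, (if m ≤ (k:ℝ) then y ^ k / (k.factorial : ℝ) else 0) := by
  rw [B_eq']
  apply mul_le_mul_of_nonneg_left _ (Real.exp_nonneg _)
  have hsf : Summable (fun k : ℕ => y ^ (k + (n+1)) / ((k + (n+1)).factorial : ℝ)) :=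
    (summable_nat_add_iff (f := fun k : ℕ => y ^ k / (k.factorial : ℝ)) (n+1)).2 (summable_pois y)
  refine Summable.tsum_le_tsum_of_inj (fun k => k + (n+1)) (add_left_injective _) ?_ ?_ hsf
    (summable_ite y hy _)
  · intro k _
    by_cases h : m ≤ (k:ℝ) <;> simp [h]; positivity
  · intro k
    have h2 : m ≤ ((k + (n+1) : ℕ):ℝ) := by
      push_cast; linarith [Nat.cast_nonneg (α := ℝ) k]
    simp only [if_pos h2, le_refl]

lemma A_le_exp (n : ℕ) (y : ℝ) (hy : 0 ≤ y) :
    ∑ k ∈ Finset.range (n+1), y ^ k / (k.factorial : ℝ) ≤ Real.exp y := by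
  rw [← tsum_pois]
  exact Summable.sum_le_tsum _ (fun k _ => by positivity) (summable_pois y)

lemma A_tail (n : ℕ) (y m : ℝ) (hy : 0 ≤ y) (hm : (n:ℝ) ≤ m) :
    ∑ k ∈ Finset.range (n+1), y ^ k / (k.factorial : ℝ)
      ≤ ∑' k : ℕ, (if (k:ℝ) ≤ m then y ^ k / (k.factorial : ℝ) else 0) := by
  have h1 : ∑ k ∈ Finset.range (n+1), y ^ k / (k.factorial : ℝ)
      = ∑ k ∈ Finset.range (n+1), (if (k:ℝ) ≤ m then y ^ k / (k.factorial : ℝ) else 0) := by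
    apply Finset.sum_congr rfl
    intro k hk
    have : (k:ℝ) ≤ m := by
      have := Finset.mem_range.mp hk
      have : (k:ℝ) ≤ (n:ℝ) := by exact_mod_cast Nat.lt_succ_iff.mp this
      linarith
    simp [this]
  rw [h1]
  exact Summable.sum_le_tsum _ (fun k _ => by by_cases h : (k:ℝ) ≤ m <;> simp [h]; positivity)
    (summable_ite y hy _)

lemma E_le_two_tails (x : ℝ) (hx : 0 ≤ x) (g : ℕ → ℝ) (h0 : ∀ i, 0 ≤ g i) (h1 : ∀ i, g i ≤ 1)
    (P : ℕ → Prop) [DecidablePred P] (Q : ℝ) (hQ : 0 ≤ Q)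
    (hg : ∀ i, ¬ P i → g i ≤ Q) :
    Real.exp (-x) * ∑' i : ℕ, (x ^ i / (i.factorial : ℝ)) * g i
      ≤ Q + Real.exp (-x) * ∑' i : ℕ, (if P i then x ^ i / (i.factorial : ℝ) else 0) := by
  have hterm : ∀ i : ℕ, (x ^ i / (i.factorial : ℝ)) * g i
      ≤ Q * (x ^ i / (i.factorial : ℝ)) + (if P i then x ^ i / (i.factorial : ℝ) else 0) := by
    intro i
    have hp : (0:ℝ) ≤ x ^ i / (i.factorial : ℝ) := by positivity
    by_cases h : P i
    · simp only [h, if_true]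
      nlinarith [h1 i, mul_nonneg hQ hp]
    · simp only [h, if_false, add_zero]
      calc (x ^ i / (i.factorial : ℝ)) * g i ≤ (x ^ i / (i.factorial : ℝ)) * Q :=
            mul_le_mul_of_nonneg_left (hg i h) hp
        _ = Q * (x ^ i / (i.factorial : ℝ)) := mul_comm _ _
  have hs1 : Summable (fun i : ℕ => Q * (x ^ i / (i.factorial : ℝ))) := (summable_pois x).mul_left Q
  have hs2 := summable_ite x hx P
  have hsL : Summable (fun i : ℕ => (x ^ i / (i.factorial : ℝ)) * g i) := by
    apply Summable.of_nonneg_of_le (fun i => mul_nonneg (by positivity) (h0 i))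
      _ (summable_pois x)
    intro i
    calc (x ^ i / (i.factorial : ℝ)) * g i ≤ (x ^ i / (i.factorial : ℝ)) * 1 :=
        mul_le_mul_of_nonneg_left (h1 i) (by positivity)
      _ = x ^ i / (i.factorial : ℝ) := mul_one _
  calc Real.exp (-x) * ∑' i : ℕ, (x ^ i / (i.factorial : ℝ)) * g i
      ≤ Real.exp (-x) * ∑' i : ℕ, (Q * (x ^ i / (i.factorial : ℝ))
          + (if P i then x ^ i / (i.factorial : ℝ) else 0)) := by
        apply mul_le_mul_of_nonneg_left _ (Real.exp_nonneg _)
        exact Summable.tsum_le_tsum hterm hsL (hs1.add hs2)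
    _ = Q + Real.exp (-x) * ∑' i : ℕ, (if P i then x ^ i / (i.factorial : ℝ) else 0) := by
        rw [Summable.tsum_add hs1 hs2, tsum_mul_left, tsum_pois, mul_add, ← mul_assoc]
        rw [mul_comm (Real.exp (-x)) Q, mul_assoc, ← Real.exp_add]
        simp

lemma exp_mul_cheb (x t : ℝ) (hx : 0 ≤ x) (ht : 0 < t) (P : ℕ → Prop) [DecidablePred P]
    (hP : ∀ k, P k → t ≤ |(k:ℝ) - x|) :
    Real.exp (-x) * ∑' k : ℕ, (if P k then x ^ k / (k.factorial : ℝ) else 0) ≤ x / t^2 := by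
  calc Real.exp (-x) * ∑' k : ℕ, (if P k then x ^ k / (k.factorial : ℝ) else 0)
      ≤ Real.exp (-x) * (x * Real.exp x / t^2) :=
        mul_le_mul_of_nonneg_left (cheb x t hx ht P hP) (Real.exp_nonneg _)
    _ = x / t^2 := by
        rw [Real.exp_neg]
        have := Real.exp_pos x
        field_simp

lemma outage_nonneg (x y : ℝ) (hx : 0 ≤ x) (hy : 0 ≤ y) :
    0 ≤ Real.exp (-x) * ∑' i : ℕ, (x ^ i / (i.factorial : ℝ))
      * (lowerIncGamma (1 + i) y / (i.factorial : ℝ)) := by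
  apply mul_nonneg (Real.exp_nonneg _)
  apply tsum_nonneg
  intro i
  rw [B_eq]
  exact mul_nonneg (by positivity) (B_nonneg i y hy)

lemma outage_le (x y m : ℝ) (hx : 0 ≤ x) (hy : 0 ≤ y) (hym : y < m) (hmx : m < x) :
    Real.exp (-x) * ∑' i : ℕ, (x ^ i / (i.factorial : ℝ))
        * (lowerIncGamma (1 + i) y / (i.factorial : ℝ))
      ≤ y / (m - y)^2 + x / (x - m)^2 := by
  have hrw : (fun i : ℕ => (x ^ i / (i.factorial : ℝ)) * (lowerIncGamma (1 + i) y / (i.factorial : ℝ)))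
      = fun i : ℕ => (x ^ i / (i.factorial : ℝ))
        * (1 - Real.exp (-y) * ∑ k ∈ Finset.range (i+1), y ^ k / (k.factorial : ℝ)) := by
    funext i; rw [B_eq]
  rw [hrw]
  set Q : ℝ := Real.exp (-y) * ∑' k : ℕ, (if m ≤ (k:ℝ) then y ^ k / (k.factorial : ℝ) else 0) with hQdef
  have hQ0 : 0 ≤ Q := mul_nonneg (Real.exp_nonneg _) (tsum_nonneg fun k => by
    by_cases h : m ≤ (k:ℝ) <;> simp [h]; positivity)
  have step := E_le_two_tails x hx
    (fun i => 1 - Real.exp (-y) * ∑ k ∈ Finset.range (i+1), y ^ k / (k.factorial : ℝ))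
    (fun i => B_nonneg i y hy) (fun i => B_le_one i y hy)
    (fun i => ((i:ℝ) + 1 < m)) Q hQ0
    (fun i hi => B_tail i y m hy (by push_cast at hi ⊢; linarith [not_lt.mp hi]))
  have hQle : Q ≤ y / (m - y)^2 :=
    exp_mul_cheb y (m - y) hy (by linarith) _ (fun k hk => by
      rw [abs_of_nonneg (by linarith)]; linarith)
  have htail : Real.exp (-x) * ∑' i : ℕ, (if ((i:ℝ) + 1 < m) then x ^ i / (i.factorial : ℝ) else 0)
      ≤ x / (x - m)^2 :=
    exp_mul_cheb x (x - m) hx (by linarith) _ (fun i hi => by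
      rw [abs_of_nonpos (by linarith)]; linarith)
  calc Real.exp (-x) * ∑' i : ℕ, (x ^ i / (i.factorial : ℝ))
        * (1 - Real.exp (-y) * ∑ k ∈ Finset.range (i+1), y ^ k / (k.factorial : ℝ))
      ≤ Q + Real.exp (-x) * ∑' i : ℕ, (if ((i:ℝ) + 1 < m) then x ^ i / (i.factorial : ℝ) else 0) :=
        step
    _ ≤ y / (m - y)^2 + x / (x - m)^2 := add_le_add hQle htail

lemma outage_eq (x y : ℝ) (hx : 0 ≤ x) (hy : 0 ≤ y) :
    Real.exp (-x) * ∑' i : ℕ, (x ^ i / (i.factorial : ℝ))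
        * (lowerIncGamma (1 + i) y / (i.factorial : ℝ))
      = 1 - Real.exp (-x) * ∑' i : ℕ, (x ^ i / (i.factorial : ℝ))
        * (Real.exp (-y) * ∑ k ∈ Finset.range (i+1), y ^ k / (k.factorial : ℝ)) := by
  have hrw : (fun i : ℕ => (x ^ i / (i.factorial : ℝ)) * (lowerIncGamma (1 + i) y / (i.factorial : ℝ)))
      = fun i : ℕ => (x ^ i / (i.factorial : ℝ))
        - (x ^ i / (i.factorial : ℝ))
          * (Real.exp (-y) * ∑ k ∈ Finset.range (i+1), y ^ k / (k.factorial : ℝ)) := by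
    funext i; rw [B_eq]; ring
  have hsg : Summable (fun i : ℕ => (x ^ i / (i.factorial : ℝ))
      * (Real.exp (-y) * ∑ k ∈ Finset.range (i+1), y ^ k / (k.factorial : ℝ))) := by
    apply Summable.of_nonneg_of_le
      (fun i => mul_nonneg (by positivity) (mul_nonneg (Real.exp_nonneg _) (A_nonneg y hy i)))
      _ (summable_pois x)
    intro i
    have h1 : Real.exp (-y) * ∑ k ∈ Finset.range (i+1), y ^ k / (k.factorial : ℝ) ≤ 1 := by
      have := A_le_exp i y hy
      calc Real.exp (-y) * ∑ k ∈ Finset.range (i+1), y ^ k / (k.factorial : ℝ)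
          ≤ Real.exp (-y) * Real.exp y :=
            mul_le_mul_of_nonneg_left this (Real.exp_nonneg _)
        _ = 1 := by rw [← Real.exp_add]; simp
    calc (x ^ i / (i.factorial : ℝ)) * (Real.exp (-y) * ∑ k ∈ Finset.range (i+1), y ^ k / (k.factorial : ℝ))
        ≤ (x ^ i / (i.factorial : ℝ)) * 1 := mul_le_mul_of_nonneg_left h1 (by positivity)
      _ = x ^ i / (i.factorial : ℝ) := mul_one _
  rw [hrw, Summable.tsum_sub (summable_pois x) hsg, tsum_pois, mul_sub, ← Real.exp_add]
  simp

lemma S_nonneg (x y : ℝ) (hx : 0 ≤ x) (hy : 0 ≤ y) :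
    0 ≤ Real.exp (-x) * ∑' i : ℕ, (x ^ i / (i.factorial : ℝ))
      * (Real.exp (-y) * ∑ k ∈ Finset.range (i+1), y ^ k / (k.factorial : ℝ)) :=
  mul_nonneg (Real.exp_nonneg _) (tsum_nonneg fun i =>
    mul_nonneg (by positivity) (mul_nonneg (Real.exp_nonneg _) (A_nonneg y hy i)))

lemma S_le (x y m : ℝ) (hx : 0 ≤ x) (hy : 0 ≤ y) (hxm : x < m) (hmy : m < y) :
    Real.exp (-x) * ∑' i : ℕ, (x ^ i / (i.factorial : ℝ))
        * (Real.exp (-y) * ∑ k ∈ Finset.range (i+1), y ^ k / (k.factorial : ℝ))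
      ≤ y / (y - m)^2 + x / (m - x)^2 := by
  set Q : ℝ := Real.exp (-y) * ∑' k : ℕ, (if (k:ℝ) ≤ m then y ^ k / (k.factorial : ℝ) else 0) with hQdef
  have hQ0 : 0 ≤ Q := mul_nonneg (Real.exp_nonneg _) (tsum_nonneg fun k => by
    by_cases h : (k:ℝ) ≤ m <;> simp [h]; positivity)
  have h1 : ∀ i : ℕ, Real.exp (-y) * ∑ k ∈ Finset.range (i+1), y ^ k / (k.factorial : ℝ) ≤ 1 := by
    intro i
    calc Real.exp (-y) * ∑ k ∈ Finset.range (i+1), y ^ k / (k.factorial : ℝ)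
        ≤ Real.exp (-y) * Real.exp y :=
          mul_le_mul_of_nonneg_left (A_le_exp i y hy) (Real.exp_nonneg _)
      _ = 1 := by rw [← Real.exp_add]; simp
  have step := E_le_two_tails x hx
    (fun i => Real.exp (-y) * ∑ k ∈ Finset.range (i+1), y ^ k / (k.factorial : ℝ))
    (fun i => mul_nonneg (Real.exp_nonneg _) (A_nonneg y hy i)) h1
    (fun i => (m < (i:ℝ))) Q hQ0
    (fun i hi => by
      have him : (i:ℝ) ≤ m := not_lt.mp hi
      exact mul_le_mul_of_nonneg_left (A_tail i y m hy him) (Real.exp_nonneg _))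
  have hQle : Q ≤ y / (y - m)^2 :=
    exp_mul_cheb y (y - m) hy (by linarith) _ (fun k hk => by
      rw [abs_of_nonpos (by linarith)]; linarith)
  have htail : Real.exp (-x) * ∑' i : ℕ, (if (m < (i:ℝ)) then x ^ i / (i.factorial : ℝ) else 0)
      ≤ x / (m - x)^2 :=
    exp_mul_cheb x (m - x) hx (by linarith) _ (fun i hi => by
      rw [abs_of_nonneg (by linarith)]; linarith)
  calc Real.exp (-x) * ∑' i : ℕ, (x ^ i / (i.factorial : ℝ))
        * (Real.exp (-y) * ∑ k ∈ Finset.range (i+1), y ^ k / (k.factorial : ℝ))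
      ≤ Q + Real.exp (-x) * ∑' i : ℕ, (if (m < (i:ℝ)) then x ^ i / (i.factorial : ℝ) else 0) := step
    _ ≤ y / (y - m)^2 + x / (m - x)^2 := add_le_add hQle htail


/-- As the NLoS power b → 0⁺, the outage probability tends to 0 if a > c and to 1 if a < c. -/
theorem stmt18 (a c : ℝ) (ha : 0 ≤ a) (hc : 0 < c) :
    (c < a → Tendsto (fun b => outageF a b c) (nhdsWithin 0 (Set.Ioi 0)) (nhds 0)) ∧
    (a < c → Tendsto (fun b => outageF a b c) (nhdsWithin 0 (Set.Ioi 0)) (nhds 1)) := by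
  constructor
  · intro hca
    set K : ℝ := 4 * (a + c) / (a - c)^2 with hK
    apply squeeze_zero' (g := fun b => K * b)
    · filter_upwards [self_mem_nhdsWithin] with b hb
      have hb' : 0 < b := hb
      exact outage_nonneg (a/b) (c/b) (div_nonneg ha hb'.le) (div_nonneg hc.le hb'.le)
    · filter_upwards [self_mem_nhdsWithin] with b hb
      have hb' : 0 < b := hb
      have hac : (0:ℝ) < a - c := by linarith
      have h1 : c / b < (a + c) / (2 * b) := by
        rw [div_lt_div_iff₀ hb' (by linarith)]
        nlinarith
      have h2 : (a + c) / (2 * b) < a / b := by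
        rw [div_lt_div_iff₀ (by linarith) hb']
        nlinarith
      calc outageF a b c
          ≤ (c/b) / ((a + c) / (2 * b) - c/b)^2 + (a/b) / (a/b - (a + c) / (2 * b))^2 :=
            outage_le (a/b) (c/b) ((a + c) / (2 * b)) (div_nonneg ha hb'.le)
              (div_nonneg hc.le hb'.le) h1 h2
        _ = K * b := by
            rw [hK]
            have hb0 : b ≠ 0 := hb'.ne'
            have hac0 : a - c ≠ 0 := hac.ne'
            have e1 : (a + c)/(2*b) - c/b = (a-c)/(2*b) := by field_simp; ring
            have e2 : a/b - (a+c)/(2*b) = (a-c)/(2*b) := by field_simp; ring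
            rw [e1, e2, div_pow]
            have h4 : (a-c)^2 ≠ 0 := pow_ne_zero 2 hac0
            field_simp
            ring
    · have : Tendsto (fun b : ℝ => K * b) (nhds 0) (nhds 0) := by
        have h : Tendsto (fun b : ℝ => K * b) (nhds 0) (nhds (K * 0)) := tendsto_id.const_mul K; rwa [mul_zero] at h
      exact this.mono_left nhdsWithin_le_nhds
  · intro hac
    set S : ℝ → ℝ := fun b => Real.exp (-(a/b)) * ∑' i : ℕ, ((a/b) ^ i / (i.factorial : ℝ))
        * (Real.exp (-(c/b)) * ∑ k ∈ Finset.range (i+1), (c/b) ^ k / (k.factorial : ℝ)) with hS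
    have hSeq : (fun b => outageF a b c) =ᶠ[nhdsWithin 0 (Set.Ioi 0)] (fun b => 1 - S b) := by
      filter_upwards [self_mem_nhdsWithin] with b hb
      have hb' : 0 < b := hb
      exact outage_eq (a/b) (c/b) (div_nonneg ha hb'.le) (div_nonneg hc.le hb'.le)
    have hS0 : Tendsto S (nhdsWithin 0 (Set.Ioi 0)) (nhds 0) := by
      set K : ℝ := 4 * (a + c) / (c - a)^2 with hK
      apply squeeze_zero' (g := fun b => K * b)
      · filter_upwards [self_mem_nhdsWithin] with b hb
        have hb' : 0 < b := hb
        exact S_nonneg (a/b) (c/b) (div_nonneg ha hb'.le) (div_nonneg hc.le hb'.le)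
      · filter_upwards [self_mem_nhdsWithin] with b hb
        have hb' : 0 < b := hb
        have hca : (0:ℝ) < c - a := by linarith
        have h1 : a / b < (a + c) / (2 * b) := by
          rw [div_lt_div_iff₀ hb' (by linarith)]
          nlinarith
        have h2 : (a + c) / (2 * b) < c / b := by
          rw [div_lt_div_iff₀ (by linarith) hb']
          nlinarith
        calc S b
            ≤ (c/b) / (c/b - (a + c) / (2 * b))^2 + (a/b) / ((a + c) / (2 * b) - a/b)^2 :=
              S_le (a/b) (c/b) ((a + c) / (2 * b)) (div_nonneg ha hb'.le)
                (div_nonneg hc.le hb'.le) h1 h2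
          _ = K * b := by
              rw [hK]
              have hb0 : b ≠ 0 := hb'.ne'
              have hca0 : c - a ≠ 0 := hca.ne'
              have e1 : c/b - (a + c)/(2*b) = (c-a)/(2*b) := by field_simp; ring
              have e2 : (a+c)/(2*b) - a/b = (c-a)/(2*b) := by field_simp; ring
              rw [e1, e2, div_pow]
              have h4 : (c-a)^2 ≠ 0 := pow_ne_zero 2 hca0
              field_simp
              ring
      · have : Tendsto (fun b : ℝ => K * b) (nhds 0) (nhds 0) := by
          have h : Tendsto (fun b : ℝ => K * b) (nhds 0) (nhds (K * 0)) := tendsto_id.const_mul K; rwa [mul_zero] at h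
        exact this.mono_left nhdsWithin_le_nhds
    have : Tendsto (fun b => 1 - S b) (nhdsWithin 0 (Set.Ioi 0)) (nhds 1) := by
      simpa using tendsto_const_nhds.sub hS0
    exact this.congr' hSeq.symm
end
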